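/- For the last-passage time T on V = ([0,n]∩ℤ)^d with weight configuration ω, a vertex v lies on some geodesic (maximizing path) if and only if ω_v ≥ k_v, where k_v is the critical value computed from the weights off v; moreover if ω_v > k_v then v lies on every geodesic. -/

import Mathlib

open MeasureTheory

/-- An up-right nearest-neighbour step in the lattice (modelled on `ℕ^d`). -/
def IsStep {d : ℕ} (u v : Fin d → ℕ) : Prop :=
  ∃ i : Fin d, v = Function.update u i (u i + 1)

lemma isStep_le {d : ℕ} {u v : Fin d → ℕ} (h : IsStep u v) : ∀ i, u i ≤ v i := by
  obtain ⟨i, rfl⟩ := h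
  intro j
  rcases eq_or_ne j i with rfl | hj
  · simp
  · simp [Function.update_of_ne hj]

lemma isStep_sum {d : ℕ} {u v : Fin d → ℕ} (h : IsStep u v) :
    ∑ i, v i = (∑ i, u i) + 1 := by
  obtain ⟨i, rfl⟩ := h
  rw [Finset.sum_update_of_mem (Finset.mem_univ i)]
  rw [← Finset.sum_erase_add _ _ (Finset.mem_univ i)]
  rw [Finset.sdiff_singleton_eq_erase]
  ring

lemma chain'_rel_getLast {α : Type*} {r : α → α → Prop} (hr : Transitive r) :
    ∀ (l : List α) (x b : α), l.Chain' r → x ∈ l → l.getLast? = some b → x = b ∨ r x b := by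
  intro l
  induction l with
  | nil => simp
  | cons a t ih =>
    intro x b hc hx hb
    cases t with
    | nil =>
      simp at hx hb; subst hx hb; left; rfl
    | cons c t' =>
      unfold List.Chain' at hc; rw [List.isChain_cons_cons] at hc
      rw [List.getLast?_cons_cons] at hb
      rcases List.mem_cons.1 hx with rfl | hx'
      · rcases ih c b hc.2 (List.mem_cons_self) hb with rfl | h
        · right; exact hc.1
        · right; exact hr hc.1 h
      · exact ih x b hc.2 hx' hb

/-- `γ` is a directed up-right nearest-neighbour path from `(0,…,0)` to `(n,…,n)`. -/
def IsPath (d n : ℕ) (γ : List (Fin d → ℕ)) : Prop :=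
  γ.Chain' IsStep ∧ γ.head? = some (fun _ => 0) ∧ γ.getLast? = some (fun _ => n)

lemma path_entry_le {d n : ℕ} {γ : List (Fin d → ℕ)} (h : IsPath d n γ) :
    ∀ x ∈ γ, ∀ i, x i ≤ n := by
  obtain ⟨hc, -, hl⟩ := h
  intro x hx i
  have hc' : γ.Chain' (fun u v => ∀ j, u j ≤ v j) := hc.imp (fun _ _ h => isStep_le h)
  have htr : Transitive (fun (u v : Fin d → ℕ) => ∀ j, u j ≤ v j) :=
    fun a b c h1 h2 j => (h1 j).trans (h2 j)
  rcases chain'_rel_getLast htr γ x _ hc' hx hl with rfl | h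
  · exact le_rfl
  · exact h i

lemma path_length {d : ℕ} :
    ∀ (γ : List (Fin d → ℕ)) (a b : Fin d → ℕ), γ.Chain' IsStep →
      γ.head? = some a → γ.getLast? = some b →
      γ.length + ∑ i, a i = (∑ i, b i) + 1 := by
  intro γ
  induction γ with
  | nil => simp
  | cons x t ih =>
    intro a b hc ha hb
    simp only [List.head?_cons, Option.some_inj] at ha
    subst ha
    cases t with
    | nil =>
      simp only [List.getLast?_singleton, Option.some_inj] at hb
      subst hb; simp [Nat.add_comm]
    | cons y t' =>
      unfold List.Chain' at hc; rw [List.isChain_cons_cons] at hc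
      rw [List.getLast?_cons_cons] at hb
      have := ih y b hc.2 rfl hb
      have hs := isStep_sum hc.1
      simp only [List.length_cons] at this ⊢
      omega

lemma paths_finite (d n : ℕ) : {γ | IsPath d n γ}.Finite := by
  have hfin : {l : List (Fin d → Fin (n + 1)) | l.length ≤ n * d + 1}.Finite :=
    List.finite_length_le _ _
  have := hfin.image (fun l => l.map (fun x i => (x i : ℕ)))
  refine this.subset ?_
  rintro γ ⟨hc, ha, hb⟩
  refine ⟨γ.map (fun x i => (⟨min (x i) n, by omega⟩ : Fin (n + 1))), ?_, ?_⟩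
  · have := path_length γ _ _ hc ha hb
    simp only [Set.mem_setOf_eq, List.length_map]
    simp at this
    rw [Nat.mul_comm n d]
    omega
  · show List.map _ (List.map _ γ) = γ
    rw [List.map_map]
    refine (List.map_congr_left ?_).trans (List.map_id γ)
    intro x hx
    funext i
    have := path_entry_le ⟨hc, ha, hb⟩ x hx i
    simp [Function.comp, Nat.min_eq_left this]

lemma exists_chain {d : ℕ} :
    ∀ (k : ℕ) (a b : Fin d → ℕ), (∑ i, (b i - a i)) = k → (∀ i, a i ≤ b i) →
    ∃ γ : List (Fin d → ℕ), γ.Chain' IsStep ∧ γ.head? = some a ∧ γ.getLast? = some b := by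
  intro k
  induction k with
  | zero =>
    intro a b hk hab
    have : a = b := by
      funext i
      have : b i - a i = 0 := by
        by_contra h
        exact h (Finset.sum_eq_zero_iff.1 hk i (Finset.mem_univ i))
      have := hab i; omega
    subst this
    exact ⟨[a], List.isChain_singleton a, rfl, rfl⟩
  | succ m ih =>
    intro a b hk hab
    have hex : ∃ i, a i < b i := by
      by_contra h
      push_neg at h
      have : ∑ i, (b i - a i) = 0 := Finset.sum_eq_zero (fun i _ => by have := h i; omega)
      omega
    obtain ⟨i, hi⟩ := hex
    set a' := Function.update a i (a i + 1) with ha'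
    have hab' : ∀ j, a' j ≤ b j := by
      intro j
      rcases eq_or_ne j i with rfl | hj
      · simp [ha']; omega
      · simp [ha', Function.update_of_ne hj]; exact hab j
    have hk' : ∑ j, (b j - a' j) = m := by
      have h1 : ∑ j, (b j - a' j) + 1 = ∑ j, (b j - a j) := by
        rw [← Finset.sum_erase_add _ _ (Finset.mem_univ i),
            ← Finset.sum_erase_add _ (fun j => b j - a j) (Finset.mem_univ i)]
        have : ∀ j ∈ Finset.univ.erase i, b j - a' j = b j - a j := by
          intro j hj
          simp [ha', Function.update_of_ne (Finset.mem_erase.1 hj).1]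
        rw [Finset.sum_congr rfl this]
        simp [ha']
        omega
      omega
    obtain ⟨γ, hγc, hγh, hγl⟩ := ih a' b hk' hab'
    refine ⟨a :: γ, ?_, rfl, ?_⟩
    · unfold List.Chain'; rw [List.isChain_cons]
      refine ⟨?_, hγc⟩
      intro y hy
      rw [hγh] at hy
      obtain rfl : a' = y := by injection hy
      exact ⟨i, rfl⟩
    · rw [List.getLast?_cons]
      cases γ with
      | nil => simp at hγh
      | cons z t => simp [List.getLast?_eq_getLast] at hγl ⊢; exact hγl

lemma extend_chain {d : ℕ} :
    ∀ (k : ℕ) (a b : Fin d → ℕ) (γ : List (Fin d → ℕ)), (∑ i, (b i - a i)) = k →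
      (∀ i, a i ≤ b i) → γ.Chain' IsStep → γ.head? = some b →
    ∃ γ' : List (Fin d → ℕ), γ'.Chain' IsStep ∧ γ'.head? = some a ∧
      γ'.getLast? = γ.getLast? ∧ ∀ x ∈ γ, x ∈ γ' := by
  intro k
  induction k with
  | zero =>
    intro a b γ hk hab hc hh
    have : a = b := by
      funext i
      have h0 : b i - a i = 0 := Finset.sum_eq_zero_iff.1 hk i (Finset.mem_univ i)
      have := hab i; omega
    subst this
    exact ⟨γ, hc, hh, rfl, fun x hx => hx⟩
  | succ m ih =>
    intro a b γ hk hab hc hh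
    have hex : ∃ i, a i < b i := by
      by_contra h
      push_neg at h
      have : ∑ i, (b i - a i) = 0 := Finset.sum_eq_zero (fun i _ => by have := h i; omega)
      omega
    obtain ⟨i, hi⟩ := hex
    set a' := Function.update a i (a i + 1) with ha'
    have hab' : ∀ j, a' j ≤ b j := by
      intro j
      rcases eq_or_ne j i with rfl | hj
      · simp [ha']; omega
      · simp [ha', Function.update_of_ne hj]; exact hab j
    have hk' : ∑ j, (b j - a' j) = m := by
      have h1 : ∑ j, (b j - a' j) + 1 = ∑ j, (b j - a j) := by
        rw [← Finset.sum_erase_add _ _ (Finset.mem_univ i),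
            ← Finset.sum_erase_add _ (fun j => b j - a j) (Finset.mem_univ i)]
        have : ∀ j ∈ Finset.univ.erase i, b j - a' j = b j - a j := by
          intro j hj
          simp [ha', Function.update_of_ne (Finset.mem_erase.1 hj).1]
        rw [Finset.sum_congr rfl this]
        simp [ha']
        omega
      omega
    obtain ⟨γ', hγc, hγh, hγl, hγm⟩ := ih a' b γ hk' hab' hc hh
    refine ⟨a :: γ', ?_, rfl, ?_, fun x hx => List.mem_cons_of_mem _ (hγm x hx)⟩
    · unfold List.Chain'; rw [List.isChain_cons]
      refine ⟨?_, hγc⟩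
      intro y hy
      rw [hγh] at hy
      obtain rfl : a' = y := by injection hy
      exact ⟨i, rfl⟩
    · rw [List.getLast?_cons]
      cases γ' with
      | nil => simp at hγh
      | cons z t =>
        rw [← hγl]
        simp [List.getLast?_eq_getLast]

lemma exists_path_mem {d n : ℕ} (v : Fin d → ℕ) (hv : ∀ i, v i ≤ n) :
    ∃ γ : List (Fin d → ℕ), IsPath d n γ ∧ v ∈ γ := by
  obtain ⟨γ, hc, hh, hl⟩ := exists_chain (∑ i, ((fun _ => n) i - v i)) v (fun _ => n) rfl hv
  have hvγ : v ∈ γ := by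
    cases γ with
    | nil => simp at hh
    | cons z t => simp only [List.head?_cons, Option.some_inj] at hh; subst hh; exact List.mem_cons_self
  obtain ⟨γ', hc', hh', hl', hm'⟩ :=
    extend_chain (∑ i, (v i - (fun _ => 0) i)) (fun _ => 0) v γ rfl (fun i => Nat.zero_le _) hc hh
  exact ⟨γ', ⟨hc', hh', hl' ▸ hl⟩, hm' v hvγ⟩

lemma path_nodup {d : ℕ} {γ : List (Fin d → ℕ)} (h : γ.Chain' IsStep) : γ.Nodup := by
  have hc : γ.Chain' (fun u v => ∑ i, u i < ∑ i, v i) :=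
    h.imp (fun u v hs => by have := isStep_sum hs; omega)
  have : γ.Pairwise (fun u v => ∑ i, u i < ∑ i, v i) := by
    have : IsTrans (Fin d → ℕ) (fun u v => ∑ i, u i < ∑ i, v i) :=
      ⟨fun a b c h1 h2 => h1.trans h2⟩
    exact List.isChain_iff_pairwise.1 hc
  exact this.imp (fun {a b} hab => by intro he; subst he; omega)

lemma sum_update_mem {d : ℕ} {γ : List (Fin d → ℕ)} (hnd : γ.Nodup) {v : Fin d → ℕ}
    (hv : v ∈ γ) (ω : (Fin d → ℕ) → ℝ) (x : ℝ) :
    (γ.map (Function.update ω v x)).sum = x + ((γ.erase v).map ω).sum := by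
  classical
  have hperm : γ.Perm (v :: γ.erase v) := List.perm_cons_erase hv
  rw [(hperm.map (Function.update ω v x)).sum_eq]
  simp only [List.map_cons, List.sum_cons, Function.update_self]
  congr 1
  refine congrArg List.sum (List.map_congr_left ?_)
  intro u hu
  have : u ≠ v := (hnd.mem_erase_iff.1 hu).1
  exact Function.update_of_ne this _ _

lemma sum_update_not_mem {d : ℕ} {γ : List (Fin d → ℕ)} {v : Fin d → ℕ}
    (hv : v ∉ γ) (ω : (Fin d → ℕ) → ℝ) (x : ℝ) :
    (γ.map (Function.update ω v x)).sum = (γ.map ω).sum := by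
  refine congrArg List.sum (List.map_congr_left ?_)
  intro u hu
  refine Function.update_of_ne ?_ _ _
  intro h; subst h; exact hv hu

/-- The last-passage time: the maximal weight sum over directed paths. -/
noncomputable def passageTime (d n : ℕ) (ω : (Fin d → ℕ) → ℝ) : ℝ :=
  sSup {S : ℝ | ∃ γ : List (Fin d → ℕ), IsPath d n γ ∧ S = (γ.map ω).sum}

lemma csSup_image_finite {α : Type*} (s : Set α) (hs : s.Finite) (hne : s.Nonempty)
    (f : α → ℝ) :
    (∃ a ∈ s, f a = sSup (f '' s)) ∧ ∀ a ∈ s, f a ≤ sSup (f '' s) := by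
  have hfin := hs.image f
  have hne' : (f '' s).Nonempty := hne.image f
  have hmem := hne'.csSup_mem hfin
  obtain ⟨a, ha, hfa⟩ := hmem
  exact ⟨⟨a, ha, hfa⟩, fun b hb => le_csSup hfin.bddAbove ⟨b, hb, rfl⟩⟩

lemma passage_set_eq (d n : ℕ) (ω : (Fin d → ℕ) → ℝ) :
    {S : ℝ | ∃ γ : List (Fin d → ℕ), IsPath d n γ ∧ S = (γ.map ω).sum} =
      (fun γ => (γ.map ω).sum) '' {γ | IsPath d n γ} := by
  ext S
  constructor
  · rintro ⟨γ, hγ, rfl⟩; exact ⟨γ, hγ, rfl⟩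
  · rintro ⟨γ, hγ, rfl⟩; exact ⟨γ, hγ, rfl⟩

lemma passage_spec (d n : ℕ) (ω : (Fin d → ℕ) → ℝ) :
    (∃ γ, IsPath d n γ ∧ (γ.map ω).sum = passageTime d n ω) ∧
    ∀ γ, IsPath d n γ → (γ.map ω).sum ≤ passageTime d n ω := by
  have hP : {γ | IsPath d n γ}.Finite := paths_finite d n
  have hne : {γ | IsPath d n γ}.Nonempty := by
    obtain ⟨γ, h, _⟩ := exists_path_mem (d := d) (n := n) (fun _ => 0) (fun _ => Nat.zero_le n)
    exact ⟨γ, h⟩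
  have := csSup_image_finite _ hP hne (fun γ => (γ.map ω).sum)
  rw [passageTime, passage_set_eq]
  exact this

lemma geodesic_of_ub {d n : ℕ} (η : (Fin d → ℕ) → ℝ) {γ : List (Fin d → ℕ)}
    (h : IsPath d n γ)
    (hub : ∀ γ', IsPath d n γ' → (γ'.map η).sum ≤ (γ.map η).sum) :
    (γ.map η).sum = passageTime d n η := by
  refine le_antisymm ((passage_spec d n η).2 γ h) ?_
  rw [passageTime]
  refine csSup_le ⟨(γ.map η).sum, γ, h, rfl⟩ ?_
  rintro S ⟨γ', hγ', rfl⟩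
  exact hub γ' hγ'

/-- The critical weight `k_v`: the smallest `x ≥ 0` such that `v` lies on some maximizing
path for the configuration with the weight at `v` replaced by `x`. -/
noncomputable def critical (d n : ℕ) (ω : (Fin d → ℕ) → ℝ) (v : Fin d → ℕ) : ℝ :=
  sInf {x : ℝ | 0 ≤ x ∧ ∃ γ : List (Fin d → ℕ), IsPath d n γ ∧ v ∈ γ ∧
    (γ.map (Function.update ω v x)).sum = passageTime d n (Function.update ω v x)}

/-- A vertex `v` lies on some geodesic iff `ω_v ≥ k_v`; moreover if `ω_v > k_v` then `v` lies
on every geodesic. -/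
theorem mem_geodesic_iff (d n : ℕ) (hd : 1 ≤ d) (hn : 1 ≤ n)
    (ω : (Fin d → ℕ) → ℝ) (hω : ∀ u, 0 ≤ ω u)
    (v : Fin d → ℕ) (hv : ∀ i, v i ≤ n) :
    ((∃ γ : List (Fin d → ℕ), IsPath d n γ ∧ v ∈ γ ∧ (γ.map ω).sum = passageTime d n ω)
        ↔ critical d n ω v ≤ ω v)
    ∧ (critical d n ω v < ω v →
        ∀ γ : List (Fin d → ℕ), IsPath d n γ → (γ.map ω).sum = passageTime d n ω → v ∈ γ) := by
  classical
  set K : Set ℝ := {x : ℝ | 0 ≤ x ∧ ∃ γ : List (Fin d → ℕ), IsPath d n γ ∧ v ∈ γ ∧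
    (γ.map (Function.update ω v x)).sum = passageTime d n (Function.update ω v x)} with hK
  have hcrit_def : critical d n ω v = sInf K := rfl
  have hbdd : BddBelow K := ⟨0, fun x hx => hx.1⟩
  -- forward direction of the iff (works in all cases)
  have hmp : (∃ γ : List (Fin d → ℕ), IsPath d n γ ∧ v ∈ γ ∧ (γ.map ω).sum = passageTime d n ω)
      → critical d n ω v ≤ ω v := by
    rintro ⟨γ, hγ, hvγ, hsum⟩
    have hmem : ω v ∈ K := by
      refine ⟨hω v, γ, hγ, hvγ, ?_⟩
      rw [Function.update_eq_self]
      exact hsum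
    rw [hcrit_def]
    exact csInf_le hbdd hmem
  by_cases hR : ∃ γ : List (Fin d → ℕ), IsPath d n γ ∧ v ∉ γ
  case neg =>
    -- every path passes through v
    push_neg at hR
    refine ⟨⟨hmp, ?_⟩, ?_⟩
    · intro _
      obtain ⟨γ, hγ, hsum⟩ := (passage_spec d n ω).1
      exact ⟨γ, hγ, hR γ hγ, hsum⟩
    · intro _ γ hγ _
      exact hR γ hγ
  case pos =>
    -- set up the maxima A and B
    set Q : Set (List (Fin d → ℕ)) := {γ | IsPath d n γ ∧ v ∈ γ} with hQ
    set R : Set (List (Fin d → ℕ)) := {γ | IsPath d n γ ∧ v ∉ γ} with hRdef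
    have hQfin : Q.Finite := (paths_finite d n).subset (fun γ hγ => hγ.1)
    have hRfin : R.Finite := (paths_finite d n).subset (fun γ hγ => hγ.1)
    have hQne : Q.Nonempty := exists_path_mem v hv
    have hRne : R.Nonempty := hR
    obtain ⟨⟨γA, hγA, hA⟩, hAub⟩ :=
      csSup_image_finite Q hQfin hQne (fun γ => ((γ.erase v).map ω).sum)
    obtain ⟨⟨γB, hγB, hB⟩, hBub⟩ :=
      csSup_image_finite R hRfin hRne (fun γ => (γ.map ω).sum)
    set A : ℝ := sSup ((fun γ => ((γ.erase v).map ω).sum) '' Q) with hAdef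
    set B : ℝ := sSup ((fun γ => (γ.map ω).sum) '' R) with hBdef
    set c : ℝ := max 0 (B - A) with hc
    have hγA_nd : γA.Nodup := path_nodup hγA.1.1
    -- γA is a geodesic for weight x whenever A + x ≥ B
    have hgeo : ∀ x : ℝ, B ≤ A + x →
        (γA.map (Function.update ω v x)).sum = passageTime d n (Function.update ω v x) := by
      intro x hx
      refine geodesic_of_ub _ hγA.1 ?_
      intro γ' hγ'
      rw [sum_update_mem hγA_nd hγA.2, hA]
      by_cases hv' : v ∈ γ'
      · rw [sum_update_mem (path_nodup hγ'.1) hv']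
        have := hAub γ' ⟨hγ', hv'⟩
        linarith
      · rw [sum_update_not_mem hv']
        have := hBub γ' ⟨hγ', hv'⟩
        linarith
    have hcK : c ∈ K := by
      refine ⟨le_max_left _ _, γA, hγA.1, hγA.2, hgeo c ?_⟩
      have : B - A ≤ c := le_max_right _ _
      linarith
    have hlbK : ∀ x ∈ K, c ≤ x := by
      rintro x ⟨hx0, γ, hγ, hvγ, hmax⟩
      have h1 : (γB.map (Function.update ω v x)).sum ≤ (γ.map (Function.update ω v x)).sum := by
        rw [hmax]
        exact (passage_spec d n _).2 γB hγB.1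
      rw [sum_update_not_mem hγB.2, hB] at h1
      rw [sum_update_mem (path_nodup hγ.1) hvγ] at h1
      have h2 : ((γ.erase v).map ω).sum ≤ A := hAub γ ⟨hγ, hvγ⟩
      rw [hc]
      apply max_le hx0
      linarith
    have hc_le : c ≤ critical d n ω v := by
      rw [hcrit_def]
      exact le_csInf ⟨c, hcK⟩ hlbK
    have hsumA : (γA.map ω).sum = ω v + A := by
      have := sum_update_mem hγA_nd hγA.2 ω (ω v)
      rw [Function.update_eq_self] at this
      rw [this, hA]
    refine ⟨⟨hmp, ?_⟩, ?_⟩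
    · intro hle
      have hcv : c ≤ ω v := hc_le.trans hle
      refine ⟨γA, hγA.1, hγA.2, ?_⟩
      have := hgeo (ω v) (by have : B - A ≤ c := le_max_right _ _; linarith)
      rwa [Function.update_eq_self] at this
    · intro hlt γ hγ hsum
      by_contra hvγ
      have h1 : (γ.map ω).sum ≤ B := hBub γ ⟨hγ, hvγ⟩
      have h2 : (γA.map ω).sum ≤ passageTime d n ω := (passage_spec d n ω).2 γA hγA.1
      have hcv : c < ω v := lt_of_le_of_lt hc_le hlt
      have h3 : B - A ≤ c := le_max_right _ _
      rw [hsumA] at h2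
      rw [hsum] at h1
      linarith
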